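/- Define, for Y ∈ ℝ, V(Y) := 270·Y − 80·sin(Y) + 3·sin(2Y) − 686·sin(Y)/(3·cos²(Y/2) + 1/2) and ψ(Y) := 96·sin⁸(Y/2)/(cos²(Y/2) + 1/6) − sin(Y)·V(Y). Then ψ(0) = 0 and ψ(2π) = 0, ψ(Y) > 0 for all Y ∈ (0, 2π), the derivatives ψ^{(j)}(0) = 0 for all 0 ≤ j ≤ 7 with ψ^{(8)}(0) > 0, and ψ′(2π) = −540·π. -/

import Mathlib

noncomputable section

open Real

/-- `V(Y) = 270Y - 80 sin Y + 3 sin(2Y) - 686 sin Y/(3cos²(Y/2) + 1/2)`. -/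
def Vfun (Y : ℝ) : ℝ :=
  270 * Y - 80 * Real.sin Y + 3 * Real.sin (2 * Y) -
    686 * Real.sin Y / (3 * (Real.cos (Y / 2)) ^ 2 + 1 / 2)

/-- `ψ(Y) = 96 sin⁸(Y/2)/(cos²(Y/2) + 1/6) - sin(Y)·V(Y)`. -/
def psiFun (Y : ℝ) : ℝ :=
  96 * (Real.sin (Y / 2)) ^ 8 / ((Real.cos (Y / 2)) ^ 2 + 1 / 6) - Real.sin Y * Vfun Y

noncomputable abbrev NF0 (x : ℝ) : ℝ := (288 : ℝ) * (x ^ 0 * Real.sin x ^ 0 * Real.cos x ^ 0) + (12 : ℝ) * (x ^ 0 * Real.sin x ^ 0 * Real.cos x ^ 1) + (-249 : ℝ) * (x ^ 0 * Real.sin x ^ 0 * Real.cos x ^ 2) + (-60 : ℝ) * (x ^ 0 * Real.sin x ^ 0 * Real.cos x ^ 3) + (9 : ℝ) * (x ^ 0 * Real.sin x ^ 0 * Real.cos x ^ 4) + (-180 : ℝ) * (x ^ 1 * Real.sin x ^ 1 * Real.cos x ^ 0) + (-135 : ℝ) * (x ^ 1 * Real.sin x ^ 1 * Real.cos x ^ 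1)

noncomputable abbrev NF1 (x : ℝ) : ℝ := (16 : ℝ) * (x ^ 0 * Real.sin x ^ 1 * Real.cos x ^ 0) + (152 : ℝ) * (x ^ 0 * Real.sin x ^ 1 * Real.cos x ^ 1) + (177 : ℝ) * (x ^ 0 * Real.sin x ^ 1 * Real.cos x ^ 2) + (36 : ℝ) * (x ^ 0 * Real.sin x ^ 1 * Real.cos x ^ 3) + (-27 / 2 : ℝ) * (x ^ 0 * Real.sin x ^ 1 * Real.cos x ^ 4) + (-120 : ℝ) * (x ^ 1 * Real.sin x ^ 0 * Real.cos x ^ 1) + (-180 : ℝ) * (x ^ 1 * Real.sin x ^ 0 * Real.cos x ^ 2) + (-135 / 2 : ℝ) * (x ^ 1 * Real.sin x ^ 0 * Real.cos x ^ 3)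

noncomputable abbrev NF2 (x : ℝ) : ℝ := (-208 / 3 : ℝ) * (x ^ 0 * Real.sin x ^ 0 * Real.cos x ^ 1) + (-212 / 3 : ℝ) * (x ^ 0 * Real.sin x ^ 0 * Real.cos x ^ 2) + (59 : ℝ) * (x ^ 0 * Real.sin x ^ 0 * Real.cos x ^ 3) + (315 / 4 : ℝ) * (x ^ 0 * Real.sin x ^ 0 * Real.cos x ^ 4) + (9 : ℝ) * (x ^ 0 * Real.sin x ^ 0 * Real.cos x ^ 5) + (-27 / 4 : ℝ) * (x ^ 0 * Real.sin x ^ 0 * Real.cos x ^ 6) + (-256 / 3 : ℝ) * (x ^ 0 * Real.sin x ^ 2 * Real.cos x ^ 0) + (-160 : ℝ) * (x ^ 0 * Real.sin x ^ 2 * Real.cos x ^ 1) + (-72 : ℝ) * (x ^ 0 * Real.sin x ^ 2 * Real.cos x ^ 2) + (18 : ℝ) * (x ^ 0 * Real.sin x ^ 2 * Real.cos x ^ 3) + (27 / 2 : ℝ) * (x ^ 0 * Real.sin x ^ 2 * Real.cos x ^ 4) + (80 : ℝ) * (x ^ 1 * Real.sin x ^ 1 * Real.cos x ^ 0) + (180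 : ℝ) * (x ^ 1 * Real.sin x ^ 1 * Real.cos x ^ 1) + (135 : ℝ) * (x ^ 1 * Real.sin x ^ 1 * Real.cos x ^ 2) + (135 / 4 : ℝ) * (x ^ 1 * Real.sin x ^ 1 * Real.cos x ^ 3)

noncomputable abbrev NF3 (x : ℝ) : ℝ := (896 / 9 : ℝ) * (x ^ 0 * Real.sin x ^ 1 * Real.cos x ^ 0) + (640 / 9 : ℝ) * (x ^ 0 * Real.sin x ^ 1 * Real.cos x ^ 1) + (-272 : ℝ) * (x ^ 0 * Real.sin x ^ 1 * Real.cos x ^ 2) + (-376 : ℝ) * (x ^ 0 * Real.sin x ^ 1 * Real.cos x ^ 3) + (-201 / 2 : ℝ) * (x ^ 0 * Real.sin x ^ 1 * Real.cos x ^ 4) + (54 : ℝ) * (x ^ 0 * Real.sin x ^ 1 * Real.cos x ^ 5) + (189 / 8 : ℝ) * (x ^ 0 * Real.sin x ^ 1 * Real.cos x ^ 6) + (-64 / 3 : ℝ) * (x ^ 0 * Real.sin x ^ 3 * Real.cos x ^ 0) + (-64 : ℝ) * (x ^ 0 * Real.sin x ^ 3 * Real.cos x ^ 1) + (-72 : ℝ)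 * (x ^ 0 * Real.sin x ^ 3 * Real.cos x ^ 2) + (-36 : ℝ) * (x ^ 0 * Real.sin x ^ 3 * Real.cos x ^ 3) + (-27 / 4 : ℝ) * (x ^ 0 * Real.sin x ^ 3 * Real.cos x ^ 4) + (160 / 3 : ℝ) * (x ^ 1 * Real.sin x ^ 0 * Real.cos x ^ 1) + (160 : ℝ) * (x ^ 1 * Real.sin x ^ 0 * Real.cos x ^ 2) + (180 : ℝ) * (x ^ 1 * Real.sin x ^ 0 * Real.cos x ^ 3) + (90 : ℝ) * (x ^ 1 * Real.sin x ^ 0 * Real.cos x ^ 4) + (135 / 8 : ℝ) * (x ^ 1 * Real.sin x ^ 0 * Real.cos x ^ 5)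

noncomputable abbrev NF4 (x : ℝ) : ℝ := (2752 / 27 : ℝ) * (x ^ 0 * Real.sin x ^ 0 * Real.cos x ^ 1) + (6224 / 27 : ℝ) * (x ^ 0 * Real.sin x ^ 0 * Real.cos x ^ 2) + (488 / 9 : ℝ) * (x ^ 0 * Real.sin x ^ 0 * Real.cos x ^ 3) + (-710 / 3 : ℝ) * (x ^ 0 * Real.sin x ^ 0 * Real.cos x ^ 4) + (-795 / 4 : ℝ) * (x ^ 0 * Real.sin x ^ 0 * Real.cos x ^ 5) + (-93 / 16 : ℝ) * (x ^ 0 * Real.sin x ^ 0 * Real.cos x ^ 6) + (171 / 4 : ℝ) * (x ^ 0 * Real.sin x ^ 0 * Real.cos x ^ 7) + (189 / 16 : ℝ) * (x ^ 0 * Real.sin x ^ 0 * Real.cos x ^ 8) + (4096 / 27 : ℝ) * (x ^ 0 * Real.sin x ^ 2 * Real.cos x ^ 0) + (1280 / 3 : ℝ) * (x ^ 0 * Real.sin x ^ 2 * Real.cos x ^ 1) + (320 : ℝ) * (x ^ 0 * Real.sin x ^ 2 * Real.cos x ^ 2) + (-160 : ℝ) * (x ^ 0 * Real.sin x ^ 2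 * Real.cos x ^ 3) + (-360 : ℝ) * (x ^ 0 * Real.sin x ^ 2 * Real.cos x ^ 4) + (-189 : ℝ) * (x ^ 0 * Real.sin x ^ 2 * Real.cos x ^ 5) + (-135 / 4 : ℝ) * (x ^ 0 * Real.sin x ^ 2 * Real.cos x ^ 6) + (-320 / 9 : ℝ) * (x ^ 1 * Real.sin x ^ 1 * Real.cos x ^ 0) + (-400 / 3 : ℝ) * (x ^ 1 * Real.sin x ^ 1 * Real.cos x ^ 1) + (-200 : ℝ) * (x ^ 1 * Real.sin x ^ 1 * Real.cos x ^ 2) + (-150 : ℝ) * (x ^ 1 * Real.sin x ^ 1 * Real.cos x ^ 3) + (-225 / 4 : ℝ) * (x ^ 1 * Real.sin x ^ 1 * Real.cos x ^ 4) + (-135 / 16 : ℝ) * (x ^ 1 * Real.sin x ^ 1 * Real.cos x ^ 5)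

noncomputable abbrev NF5 (x : ℝ) : ℝ := (-7424 / 81 : ℝ) * (x ^ 0 * Real.sin x ^ 1 * Real.cos x ^ 0) + (-640 / 81 : ℝ) * (x ^ 0 * Real.sin x ^ 1 * Real.cos x ^ 1) + (20464 / 27 : ℝ) * (x ^ 0 * Real.sin x ^ 1 * Real.cos x ^ 2) + (4016 / 3 : ℝ) * (x ^ 0 * Real.sin x ^ 1 * Real.cos x ^ 3) + (1615 / 3 : ℝ) * (x ^ 0 * Real.sin x ^ 1 * Real.cos x ^ 4) + (-1301 / 2 : ℝ) * (x ^ 0 * Real.sin x ^ 1 * Real.cos x ^ 5) + (-13005 / 16 : ℝ) * (x ^ 0 * Real.sin x ^ 1 * Real.cos x ^ 6) + (-1359 / 4 : ℝ) * (x ^ 0 * Real.sin x ^ 1 * Real.cos x ^ 7) + (-1647 / 32 : ℝ) * (x ^ 0 * Real.sin x ^ 1 * Real.cos x ^ 8) + (2560 / 27 : ℝ) * (x ^ 0 * Real.sin x ^ 3 * Real.cos x ^ 0) + (1280 / 3 : ℝ) * (x ^ 0 * Real.sin x ^ 3 * Real.cos x ^ 1) + (800 : ℝ) * (x ^ 0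 * Real.sin x ^ 3 * Real.cos x ^ 2) + (800 : ℝ) * (x ^ 0 * Real.sin x ^ 3 * Real.cos x ^ 3) + (450 : ℝ) * (x ^ 0 * Real.sin x ^ 3 * Real.cos x ^ 4) + (135 : ℝ) * (x ^ 0 * Real.sin x ^ 3 * Real.cos x ^ 5) + (135 / 8 : ℝ) * (x ^ 0 * Real.sin x ^ 3 * Real.cos x ^ 6) + (-640 / 27 : ℝ) * (x ^ 1 * Real.sin x ^ 0 * Real.cos x ^ 1) + (-320 / 3 : ℝ) * (x ^ 1 * Real.sin x ^ 0 * Real.cos x ^ 2) + (-200 : ℝ) * (x ^ 1 * Real.sin x ^ 0 * Real.cos x ^ 3) + (-200 : ℝ) * (x ^ 1 * Real.sin x ^ 0 * Real.cos x ^ 4) + (-225 / 2 : ℝ) * (x ^ 1 * Real.sin x ^ 0 * Real.cos x ^ 5) + (-135 / 4 : ℝ) * (x ^ 1 * Real.sin x ^ 0 * Real.cos x ^ 6) + (-135 / 32 : ℝ) * (x ^ 1 * Real.sin x ^ 0 * Real.cos x ^ 7)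

noncomputable abbrev NF6 (x : ℝ) : ℝ := (-18688 / 243 : ℝ) * (x ^ 0 * Real.sin x ^ 0 * Real.cos x ^ 1) + (-32576 / 243 : ℝ) * (x ^ 0 * Real.sin x ^ 0 * Real.cos x ^ 2) + (944 / 3 : ℝ) * (x ^ 0 * Real.sin x ^ 0 * Real.cos x ^ 3) + (28028 / 27 : ℝ) * (x ^ 0 * Real.sin x ^ 0 * Real.cos x ^ 4) + (7679 / 9 : ℝ) * (x ^ 0 * Real.sin x ^ 0 * Real.cos x ^ 5) + (-973 / 4 : ℝ) * (x ^ 0 * Real.sin x ^ 0 * Real.cos x ^ 6) + (-14189 / 16 : ℝ) * (x ^ 0 * Real.sin x ^ 0 * Real.cos x ^ 7) + (-40641 / 64 : ℝ) * (x ^ 0 * Real.sin x ^ 0 * Real.cos x ^ 8) + (-3267 / 16 : ℝ) * (x ^ 0 * Real.sin x ^ 0 * Real.cos x ^ 9) + (-1647 / 64 : ℝ) * (x ^ 0 * Real.sin x ^ 0 * Real.cos x ^ 10) + (-65536 / 243 : ℝ) * (x ^ 0 * Real.sin x ^ 2 * Real.cos x ^ 0) + (-68096 / 81 : ℝ) *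 (x ^ 0 * Real.sin x ^ 2 * Real.cos x ^ 1) + (-4480 / 27 : ℝ) * (x ^ 0 * Real.sin x ^ 2 * Real.cos x ^ 2) + (25312 / 9 : ℝ) * (x ^ 0 * Real.sin x ^ 2 * Real.cos x ^ 3) + (16520 / 3 : ℝ) * (x ^ 0 * Real.sin x ^ 2 * Real.cos x ^ 4) + (5026 : ℝ) * (x ^ 0 * Real.sin x ^ 2 * Real.cos x ^ 5) + (5061 / 2 : ℝ) * (x ^ 0 * Real.sin x ^ 2 * Real.cos x ^ 6) + (5445 / 8 : ℝ) * (x ^ 0 * Real.sin x ^ 2 * Real.cos x ^ 7) + (2457 / 32 : ℝ) * (x ^ 0 * Real.sin x ^ 2 * Real.cos x ^ 8) + (1280 / 81 : ℝ) * (x ^ 1 * Real.sin x ^ 1 * Real.cos x ^ 0) + (2240 / 27 : ℝ) * (x ^ 1 * Real.sin x ^ 1 * Real.cos x ^ 1) + (560 / 3 : ℝ) * (x ^ 1 * Real.sin x ^ 1 * Real.cos x ^ 2) + (700 / 3 : ℝ) * (x ^ 1 * Real.sin x ^ 1 * Real.cos x ^ 3) + (175 : ℝ) * (x ^ 1 *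 Real.sin x ^ 1 * Real.cos x ^ 4) + (315 / 4 : ℝ) * (x ^ 1 * Real.sin x ^ 1 * Real.cos x ^ 5) + (315 / 16 : ℝ) * (x ^ 1 * Real.sin x ^ 1 * Real.cos x ^ 6) + (135 / 64 : ℝ) * (x ^ 1 * Real.sin x ^ 1 * Real.cos x ^ 7)

noncomputable abbrev NF7 (x : ℝ) : ℝ := (45056 / 729 : ℝ) * (x ^ 0 * Real.sin x ^ 1 * Real.cos x ^ 0) + (-253952 / 729 : ℝ) * (x ^ 0 * Real.sin x ^ 1 * Real.cos x ^ 1) + (-531968 / 243 : ℝ) * (x ^ 0 * Real.sin x ^ 1 * Real.cos x ^ 2) + (-239104 / 81 : ℝ) * (x ^ 0 * Real.sin x ^ 1 * Real.cos x ^ 3) + (68320 / 27 : ℝ) * (x ^ 0 * Real.sin x ^ 1 * Real.cos x ^ 4) + (109088 / 9 : ℝ) * (x ^ 0 * Real.sin x ^ 1 * Real.cos x ^ 5) + (48832 / 3 : ℝ) * (x ^ 0 * Real.sin x ^ 1 * Real.cos x ^ 6) + (11798 : ℝ) * (x ^ 0 * Real.sin x ^ 1 * Real.cos x ^ 7) +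 (79707 / 16 : ℝ) * (x ^ 0 * Real.sin x ^ 1 * Real.cos x ^ 8) + (4635 / 4 : ℝ) * (x ^ 0 * Real.sin x ^ 1 * Real.cos x ^ 9) + (14769 / 128 : ℝ) * (x ^ 0 * Real.sin x ^ 1 * Real.cos x ^ 10) + (-93184 / 243 : ℝ) * (x ^ 0 * Real.sin x ^ 3 * Real.cos x ^ 0) + (-186368 / 81 : ℝ) * (x ^ 0 * Real.sin x ^ 3 * Real.cos x ^ 1) + (-163072 / 27 : ℝ) * (x ^ 0 * Real.sin x ^ 3 * Real.cos x ^ 2) + (-81536 / 9 : ℝ) * (x ^ 0 * Real.sin x ^ 3 * Real.cos x ^ 3) + (-25480 / 3 : ℝ) * (x ^ 0 * Real.sin x ^ 3 * Real.cos x ^ 4) + (-5096 : ℝ) * (x ^ 0 * Real.sin x ^ 3 * Real.cos x ^ 5) + (-1911 : ℝ) * (x ^ 0 * Real.sin x ^ 3 * Real.cos x ^ 6) + (-819 / 2 : ℝ) * (x ^ 0 * Real.sin x ^ 3 * Real.cos x ^ 7) + (-2457 / 64 : ℝ) * (x ^ 0 * Real.sin x ^ 3 * Real.cos x ^ 8)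 + (2560 / 243 : ℝ) * (x ^ 1 * Real.sin x ^ 0 * Real.cos x ^ 1) + (5120 / 81 : ℝ) * (x ^ 1 * Real.sin x ^ 0 * Real.cos x ^ 2) + (4480 / 27 : ℝ) * (x ^ 1 * Real.sin x ^ 0 * Real.cos x ^ 3) + (2240 / 9 : ℝ) * (x ^ 1 * Real.sin x ^ 0 * Real.cos x ^ 4) + (700 / 3 : ℝ) * (x ^ 1 * Real.sin x ^ 0 * Real.cos x ^ 5) + (140 : ℝ) * (x ^ 1 * Real.sin x ^ 0 * Real.cos x ^ 6) + (105 / 2 : ℝ) * (x ^ 1 * Real.sin x ^ 0 * Real.cos x ^ 7) + (45 / 4 : ℝ) * (x ^ 1 * Real.sin x ^ 0 * Real.cos x ^ 8) + (135 / 128 : ℝ) * (x ^ 1 * Real.sin x ^ 0 * Real.cos x ^ 9)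

noncomputable abbrev NF8 (x : ℝ) : ℝ := (105472 / 2187 : ℝ) * (x ^ 0 * Real.sin x ^ 0 * Real.cos x ^ 1) + (-336640 / 2187 : ℝ) * (x ^ 0 * Real.sin x ^ 0 * Real.cos x ^ 2) + (-1087232 / 729 : ℝ) * (x ^ 0 * Real.sin x ^ 0 * Real.cos x ^ 3) + (-75968 / 27 : ℝ) * (x ^ 0 * Real.sin x ^ 0 * Real.cos x ^ 4) + (13256 / 27 : ℝ) * (x ^ 0 * Real.sin x ^ 0 * Real.cos x ^ 5) + (86002 / 9 : ℝ) * (x ^ 0 * Real.sin x ^ 0 * Real.cos x ^ 6) + (17017 : ℝ) * (x ^ 0 * Real.sin x ^ 0 * Real.cos x ^ 7) + (64151 / 4 : ℝ) * (x ^ 0 * Real.sin x ^ 0 * Real.cos x ^ 8) + (590493 / 64 : ℝ) * (x ^ 0 * Real.sin x ^ 0 * Real.cos x ^ 9) + (835551 / 256 : ℝ) * (x ^ 0 * Real.sin x ^ 0 * Real.cos x ^ 10) + (42003 / 64 : ℝ) * (x ^ 0 * Real.sin x ^ 0 * Real.cos x ^ 11) + (14769 / 256 : ℝ) * (x ^ 0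 * Real.sin x ^ 0 * Real.cos x ^ 12) + (1048576 / 2187 : ℝ) * (x ^ 0 * Real.sin x ^ 2 * Real.cos x ^ 0) + (679936 / 729 : ℝ) * (x ^ 0 * Real.sin x ^ 2 * Real.cos x ^ 1) + (-157696 / 27 : ℝ) * (x ^ 0 * Real.sin x ^ 2 * Real.cos x ^ 2) + (-800768 / 27 : ℝ) * (x ^ 0 * Real.sin x ^ 2 * Real.cos x ^ 3) + (-562688 / 9 : ℝ) * (x ^ 0 * Real.sin x ^ 2 * Real.cos x ^ 4) + (-77504 : ℝ) * (x ^ 0 * Real.sin x ^ 2 * Real.cos x ^ 5) + (-61712 : ℝ) * (x ^ 0 * Real.sin x ^ 2 * Real.cos x ^ 6) + (-32136 : ℝ) * (x ^ 0 * Real.sin x ^ 2 * Real.cos x ^ 7) + (-10638 : ℝ) * (x ^ 0 * Real.sin x ^ 2 * Real.cos x ^ 8) + (-16317 / 8 : ℝ) * (x ^ 0 * Real.sin x ^ 2 * Real.cos x ^ 9) + (-5535 / 32 : ℝ) * (x ^ 0 * Real.sin x ^ 2 * Real.cos x ^ 10) + (-5120 / 729 : ℝ) * (x ^ 1 * Real.sin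 x ^ 1 * Real.cos x ^ 0) + (-1280 / 27 : ℝ) * (x ^ 1 * Real.sin x ^ 1 * Real.cos x ^ 1) + (-1280 / 9 : ℝ) * (x ^ 1 * Real.sin x ^ 1 * Real.cos x ^ 2) + (-2240 / 9 : ℝ) * (x ^ 1 * Real.sin x ^ 1 * Real.cos x ^ 3) + (-280 : ℝ) * (x ^ 1 * Real.sin x ^ 1 * Real.cos x ^ 4) + (-210 : ℝ) * (x ^ 1 * Real.sin x ^ 1 * Real.cos x ^ 5) + (-105 : ℝ) * (x ^ 1 * Real.sin x ^ 1 * Real.cos x ^ 6) + (-135 / 4 : ℝ) * (x ^ 1 * Real.sin x ^ 1 * Real.cos x ^ 7) + (-405 / 64 : ℝ) * (x ^ 1 * Real.sin x ^ 1 * Real.cos x ^ 8) + (-135 / 256 : ℝ) * (x ^ 1 * Real.sin x ^ 1 * Real.cos x ^ 9)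

lemma Dpos (Y : ℝ) : (0:ℝ) < 2/3 + Real.cos Y / 2 := by nlinarith [Real.neg_one_le_cos Y]

lemma chain0 (Y : ℝ) : HasDerivAt (fun x => NF0 x / (2/3 + Real.cos x / 2) ^ 1)
    (NF1 Y / (2/3 + Real.cos Y / 2) ^ 2) Y := by
  have hD : (2/3 + Real.cos Y / 2) ≠ 0 := ne_of_gt (Dpos Y)
  have hnum := ((((((((((hasDerivAt_pow 0 Y).mul ((Real.hasDerivAt_sin Y).pow 0)).mul ((Real.hasDerivAt_cos Y).pow 0)).const_mul (288 : ℝ)).add ((((hasDerivAt_pow 0 Y).mul ((Real.hasDerivAt_sin Y).pow 0)).mul ((Real.hasDerivAt_cos Y).pow 1)).const_mul (12 : ℝ))).add ((((hasDerivAt_pow 0 Y).mul ((Real.hasDerivAt_sin Y).pow 0)).mul ((Real.hasDerivAt_cos Y).pow 2)).const_mul (-249 : ℝ))).add ((((hasDerivAt_pow 0 Y).mul ((Real.hasDerivAt_sin Y).pow 0)).mul ((Real.hasDerivAt_cos Y).pow 3)).const_mul (-60 : ℝ))).add ((((hasDerivAt_pow 0 Y).mul ((Real.hasDerivAt_sin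 Y).pow 0)).mul ((Real.hasDerivAt_cos Y).pow 4)).const_mul (9 : ℝ))).add ((((hasDerivAt_pow 1 Y).mul ((Real.hasDerivAt_sin Y).pow 1)).mul ((Real.hasDerivAt_cos Y).pow 0)).const_mul (-180 : ℝ))).add ((((hasDerivAt_pow 1 Y).mul ((Real.hasDerivAt_sin Y).pow 1)).mul ((Real.hasDerivAt_cos Y).pow 1)).const_mul (-135 : ℝ)))
  have hden := (((Real.hasDerivAt_cos Y).div_const 2).const_add (2/3 : ℝ)).pow 1
  have h := hnum.div hden (pow_ne_zero _ hD)
  refine h.congr_deriv ?_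
  symm
  simp only [Pi.pow_apply, Pi.mul_apply, Pi.add_apply, Pi.sub_apply]
  rw [div_eq_div_iff (pow_ne_zero _ hD) (pow_ne_zero 2 (pow_ne_zero _ hD))]
  push_cast
  ring

lemma chainD0 : deriv (fun x => NF0 x / (2/3 + Real.cos x / 2) ^ 1)
    = (fun x => NF1 x / (2/3 + Real.cos x / 2) ^ 2) :=
  funext fun Y => (chain0 Y).deriv

lemma chain1 (Y : ℝ) : HasDerivAt (fun x => NF1 x / (2/3 + Real.cos x / 2) ^ 2)
    (NF2 Y / (2/3 + Real.cos Y / 2) ^ 3) Y := by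
  have hD : (2/3 + Real.cos Y / 2) ≠ 0 := ne_of_gt (Dpos Y)
  have hnum := (((((((((((hasDerivAt_pow 0 Y).mul ((Real.hasDerivAt_sin Y).pow 1)).mul ((Real.hasDerivAt_cos Y).pow 0)).const_mul (16 : ℝ)).add ((((hasDerivAt_pow 0 Y).mul ((Real.hasDerivAt_sin Y).pow 1)).mul ((Real.hasDerivAt_cos Y).pow 1)).const_mul (152 : ℝ))).add ((((hasDerivAt_pow 0 Y).mul ((Real.hasDerivAt_sin Y).pow 1)).mul ((Real.hasDerivAt_cos Y).pow 2)).const_mul (177 : ℝ))).add ((((hasDerivAt_pow 0 Y).mul ((Real.hasDerivAt_sin Y).pow 1)).mul ((Real.hasDerivAt_cos Y).pow 3)).const_mul (36 : ℝ))).add ((((hasDerivAt_pow 0 Y).mul ((Real.hasDerivAt_sin Y).pow 1)).mul ((Real.hasDerivAt_cos Y).pow 4)).const_mul (-27 / 2 : ℝ))).add ((((hasDerivAt_pow 1 Y).mul ((Real.hasDerivAt_sin Y).pow 0)).mul ((Real.hasDerivAt_cos Y).pow 1)).const_mul (-120 : ℝ))).add ((((hasDerivAt_pow 1 Y).mul ((Real.hasDerivAt_sin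 Y).pow 0)).mul ((Real.hasDerivAt_cos Y).pow 2)).const_mul (-180 : ℝ))).add ((((hasDerivAt_pow 1 Y).mul ((Real.hasDerivAt_sin Y).pow 0)).mul ((Real.hasDerivAt_cos Y).pow 3)).const_mul (-135 / 2 : ℝ)))
  have hden := (((Real.hasDerivAt_cos Y).div_const 2).const_add (2/3 : ℝ)).pow 2
  have h := hnum.div hden (pow_ne_zero _ hD)
  refine h.congr_deriv ?_
  symm
  simp only [Pi.pow_apply, Pi.mul_apply, Pi.add_apply, Pi.sub_apply]
  rw [div_eq_div_iff (pow_ne_zero _ hD) (pow_ne_zero 2 (pow_ne_zero _ hD))]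
  push_cast
  ring

lemma chainD1 : deriv (fun x => NF1 x / (2/3 + Real.cos x / 2) ^ 2)
    = (fun x => NF2 x / (2/3 + Real.cos x / 2) ^ 3) :=
  funext fun Y => (chain1 Y).deriv

lemma chain2 (Y : ℝ) : HasDerivAt (fun x => NF2 x / (2/3 + Real.cos x / 2) ^ 3)
    (NF3 Y / (2/3 + Real.cos Y / 2) ^ 4) Y := by
  have hD : (2/3 + Real.cos Y / 2) ≠ 0 := ne_of_gt (Dpos Y)
  have hnum := ((((((((((((((((((hasDerivAt_pow 0 Y).mul ((Real.hasDerivAt_sin Y).pow 0)).mul ((Real.hasDerivAt_cos Y).pow 1)).const_mul (-208 / 3 : ℝ)).add ((((hasDerivAt_pow 0 Y).mul ((Real.hasDerivAt_sin Y).pow 0)).mul ((Real.hasDerivAt_cos Y).pow 2)).const_mul (-212 / 3 : ℝ))).add ((((hasDerivAt_pow 0 Y).mul ((Real.hasDerivAt_sin Y).pow 0)).mul ((Real.hasDerivAt_cos Y).pow 3)).const_mul (59 : ℝ))).add ((((hasDerivAt_pow 0 Y).mul ((Real.hasDerivAt_sin Y).pow 0)).mul ((Real.hasDerivAt_cos Y).pow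 4)).const_mul (315 / 4 : ℝ))).add ((((hasDerivAt_pow 0 Y).mul ((Real.hasDerivAt_sin Y).pow 0)).mul ((Real.hasDerivAt_cos Y).pow 5)).const_mul (9 : ℝ))).add ((((hasDerivAt_pow 0 Y).mul ((Real.hasDerivAt_sin Y).pow 0)).mul ((Real.hasDerivAt_cos Y).pow 6)).const_mul (-27 / 4 : ℝ))).add ((((hasDerivAt_pow 0 Y).mul ((Real.hasDerivAt_sin Y).pow 2)).mul ((Real.hasDerivAt_cos Y).pow 0)).const_mul (-256 / 3 : ℝ))).add ((((hasDerivAt_pow 0 Y).mul ((Real.hasDerivAt_sin Y).pow 2)).mul ((Real.hasDerivAt_cos Y).pow 1)).const_mul (-160 : ℝ))).add ((((hasDerivAt_pow 0 Y).mul ((Real.hasDerivAt_sin Y).pow 2)).mul ((Real.hasDerivAt_cos Y).pow 2)).const_mul (-72 : ℝ))).add ((((hasDerivAt_pow 0 Y).mul ((Real.hasDerivAt_sin Y).pow 2)).mul ((Real.hasDerivAt_cos Y).pow 3)).const_mul (18 : ℝ))).add ((((hasDerivAt_pow 0 Y).mul ((Real.hasDerivAt_sin Y).pow 2)).mul ((Real.hasDerivAt_cos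 Y).pow 4)).const_mul (27 / 2 : ℝ))).add ((((hasDerivAt_pow 1 Y).mul ((Real.hasDerivAt_sin Y).pow 1)).mul ((Real.hasDerivAt_cos Y).pow 0)).const_mul (80 : ℝ))).add ((((hasDerivAt_pow 1 Y).mul ((Real.hasDerivAt_sin Y).pow 1)).mul ((Real.hasDerivAt_cos Y).pow 1)).const_mul (180 : ℝ))).add ((((hasDerivAt_pow 1 Y).mul ((Real.hasDerivAt_sin Y).pow 1)).mul ((Real.hasDerivAt_cos Y).pow 2)).const_mul (135 : ℝ))).add ((((hasDerivAt_pow 1 Y).mul ((Real.hasDerivAt_sin Y).pow 1)).mul ((Real.hasDerivAt_cos Y).pow 3)).const_mul (135 / 4 : ℝ)))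
  have hden := (((Real.hasDerivAt_cos Y).div_const 2).const_add (2/3 : ℝ)).pow 3
  have h := hnum.div hden (pow_ne_zero _ hD)
  refine h.congr_deriv ?_
  symm
  simp only [Pi.pow_apply, Pi.mul_apply, Pi.add_apply, Pi.sub_apply]
  rw [div_eq_div_iff (pow_ne_zero _ hD) (pow_ne_zero 2 (pow_ne_zero _ hD))]
  push_cast
  ring

lemma chainD2 : deriv (fun x => NF2 x / (2/3 + Real.cos x / 2) ^ 3)
    = (fun x => NF3 x / (2/3 + Real.cos x / 2) ^ 4) :=
  funext fun Y => (chain2 Y).deriv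

lemma chain3 (Y : ℝ) : HasDerivAt (fun x => NF3 x / (2/3 + Real.cos x / 2) ^ 4)
    (NF4 Y / (2/3 + Real.cos Y / 2) ^ 5) Y := by
  have hD : (2/3 + Real.cos Y / 2) ≠ 0 := ne_of_gt (Dpos Y)
  have hnum := ((((((((((((((((((((hasDerivAt_pow 0 Y).mul ((Real.hasDerivAt_sin Y).pow 1)).mul ((Real.hasDerivAt_cos Y).pow 0)).const_mul (896 / 9 : ℝ)).add ((((hasDerivAt_pow 0 Y).mul ((Real.hasDerivAt_sin Y).pow 1)).mul ((Real.hasDerivAt_cos Y).pow 1)).const_mul (640 / 9 : ℝ))).add ((((hasDerivAt_pow 0 Y).mul ((Real.hasDerivAt_sin Y).pow 1)).mul ((Real.hasDerivAt_cos Y).pow 2)).const_mul (-272 : ℝ))).add ((((hasDerivAt_pow 0 Y).mul ((Real.hasDerivAt_sin Y).pow 1)).mul ((Real.hasDerivAt_cos Y).pow 3)).const_mul (-376 : ℝ))).add ((((hasDerivAt_pow 0 Y).mul ((Real.hasDerivAt_sin Y).pow 1)).mul ((Real.hasDerivAt_cos Y).pow 4)).const_mul (-201 / 2 : ℝ))).add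 ((((hasDerivAt_pow 0 Y).mul ((Real.hasDerivAt_sin Y).pow 1)).mul ((Real.hasDerivAt_cos Y).pow 5)).const_mul (54 : ℝ))).add ((((hasDerivAt_pow 0 Y).mul ((Real.hasDerivAt_sin Y).pow 1)).mul ((Real.hasDerivAt_cos Y).pow 6)).const_mul (189 / 8 : ℝ))).add ((((hasDerivAt_pow 0 Y).mul ((Real.hasDerivAt_sin Y).pow 3)).mul ((Real.hasDerivAt_cos Y).pow 0)).const_mul (-64 / 3 : ℝ))).add ((((hasDerivAt_pow 0 Y).mul ((Real.hasDerivAt_sin Y).pow 3)).mul ((Real.hasDerivAt_cos Y).pow 1)).const_mul (-64 : ℝ))).add ((((hasDerivAt_pow 0 Y).mul ((Real.hasDerivAt_sin Y).pow 3)).mul ((Real.hasDerivAt_cos Y).pow 2)).const_mul (-72 : ℝ))).add ((((hasDerivAt_pow 0 Y).mul ((Real.hasDerivAt_sin Y).pow 3)).mul ((Real.hasDerivAt_cos Y).pow 3)).const_mul (-36 : ℝ))).add ((((hasDerivAt_pow 0 Y).mul ((Real.hasDerivAt_sin Y).pow 3)).mul ((Real.hasDerivAt_cos Y).pow 4)).const_mul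 (-27 / 4 : ℝ))).add ((((hasDerivAt_pow 1 Y).mul ((Real.hasDerivAt_sin Y).pow 0)).mul ((Real.hasDerivAt_cos Y).pow 1)).const_mul (160 / 3 : ℝ))).add ((((hasDerivAt_pow 1 Y).mul ((Real.hasDerivAt_sin Y).pow 0)).mul ((Real.hasDerivAt_cos Y).pow 2)).const_mul (160 : ℝ))).add ((((hasDerivAt_pow 1 Y).mul ((Real.hasDerivAt_sin Y).pow 0)).mul ((Real.hasDerivAt_cos Y).pow 3)).const_mul (180 : ℝ))).add ((((hasDerivAt_pow 1 Y).mul ((Real.hasDerivAt_sin Y).pow 0)).mul ((Real.hasDerivAt_cos Y).pow 4)).const_mul (90 : ℝ))).add ((((hasDerivAt_pow 1 Y).mul ((Real.hasDerivAt_sin Y).pow 0)).mul ((Real.hasDerivAt_cos Y).pow 5)).const_mul (135 / 8 : ℝ)))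
  have hden := (((Real.hasDerivAt_cos Y).div_const 2).const_add (2/3 : ℝ)).pow 4
  have h := hnum.div hden (pow_ne_zero _ hD)
  refine h.congr_deriv ?_
  symm
  simp only [Pi.pow_apply, Pi.mul_apply, Pi.add_apply, Pi.sub_apply]
  rw [div_eq_div_iff (pow_ne_zero _ hD) (pow_ne_zero 2 (pow_ne_zero _ hD))]
  push_cast
  ring

lemma chainD3 : deriv (fun x => NF3 x / (2/3 + Real.cos x / 2) ^ 4)
    = (fun x => NF4 x / (2/3 + Real.cos x / 2) ^ 5) :=
  funext fun Y => (chain3 Y).deriv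

lemma chain4 (Y : ℝ) : HasDerivAt (fun x => NF4 x / (2/3 + Real.cos x / 2) ^ 5)
    (NF5 Y / (2/3 + Real.cos Y / 2) ^ 6) Y := by
  have hD : (2/3 + Real.cos Y / 2) ≠ 0 := ne_of_gt (Dpos Y)
  have hnum := ((((((((((((((((((((((((hasDerivAt_pow 0 Y).mul ((Real.hasDerivAt_sin Y).pow 0)).mul ((Real.hasDerivAt_cos Y).pow 1)).const_mul (2752 / 27 : ℝ)).add ((((hasDerivAt_pow 0 Y).mul ((Real.hasDerivAt_sin Y).pow 0)).mul ((Real.hasDerivAt_cos Y).pow 2)).const_mul (6224 / 27 : ℝ))).add ((((hasDerivAt_pow 0 Y).mul ((Real.hasDerivAt_sin Y).pow 0)).mul ((Real.hasDerivAt_cos Y).pow 3)).const_mul (488 / 9 : ℝ))).add ((((hasDerivAt_pow 0 Y).mul ((Real.hasDerivAt_sin Y).pow 0)).mul ((Real.hasDerivAt_cos Y).pow 4)).const_mul (-710 / 3 : ℝ))).add ((((hasDerivAt_pow 0 Y).mul ((Real.hasDerivAt_sin Y).pow 0)).mul ((Real.hasDerivAt_cos Y).pow 5)).const_mul (-795 /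 4 : ℝ))).add ((((hasDerivAt_pow 0 Y).mul ((Real.hasDerivAt_sin Y).pow 0)).mul ((Real.hasDerivAt_cos Y).pow 6)).const_mul (-93 / 16 : ℝ))).add ((((hasDerivAt_pow 0 Y).mul ((Real.hasDerivAt_sin Y).pow 0)).mul ((Real.hasDerivAt_cos Y).pow 7)).const_mul (171 / 4 : ℝ))).add ((((hasDerivAt_pow 0 Y).mul ((Real.hasDerivAt_sin Y).pow 0)).mul ((Real.hasDerivAt_cos Y).pow 8)).const_mul (189 / 16 : ℝ))).add ((((hasDerivAt_pow 0 Y).mul ((Real.hasDerivAt_sin Y).pow 2)).mul ((Real.hasDerivAt_cos Y).pow 0)).const_mul (4096 / 27 : ℝ))).add ((((hasDerivAt_pow 0 Y).mul ((Real.hasDerivAt_sin Y).pow 2)).mul ((Real.hasDerivAt_cos Y).pow 1)).const_mul (1280 / 3 : ℝ))).add ((((hasDerivAt_pow 0 Y).mul ((Real.hasDerivAt_sin Y).pow 2)).mul ((Real.hasDerivAt_cos Y).pow 2)).const_mul (320 : ℝ))).add ((((hasDerivAt_pow 0 Y).mul ((Real.hasDerivAt_sin Y).pow 2)).mul ((Real.hasDerivAt_cos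 Y).pow 3)).const_mul (-160 : ℝ))).add ((((hasDerivAt_pow 0 Y).mul ((Real.hasDerivAt_sin Y).pow 2)).mul ((Real.hasDerivAt_cos Y).pow 4)).const_mul (-360 : ℝ))).add ((((hasDerivAt_pow 0 Y).mul ((Real.hasDerivAt_sin Y).pow 2)).mul ((Real.hasDerivAt_cos Y).pow 5)).const_mul (-189 : ℝ))).add ((((hasDerivAt_pow 0 Y).mul ((Real.hasDerivAt_sin Y).pow 2)).mul ((Real.hasDerivAt_cos Y).pow 6)).const_mul (-135 / 4 : ℝ))).add ((((hasDerivAt_pow 1 Y).mul ((Real.hasDerivAt_sin Y).pow 1)).mul ((Real.hasDerivAt_cos Y).pow 0)).const_mul (-320 / 9 : ℝ))).add ((((hasDerivAt_pow 1 Y).mul ((Real.hasDerivAt_sin Y).pow 1)).mul ((Real.hasDerivAt_cos Y).pow 1)).const_mul (-400 / 3 : ℝ))).add ((((hasDerivAt_pow 1 Y).mul ((Real.hasDerivAt_sin Y).pow 1)).mul ((Real.hasDerivAt_cos Y).pow 2)).const_mul (-200 : ℝ))).add ((((hasDerivAt_pow 1 Y).mul ((Real.hasDerivAt_sin Y).pow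 1)).mul ((Real.hasDerivAt_cos Y).pow 3)).const_mul (-150 : ℝ))).add ((((hasDerivAt_pow 1 Y).mul ((Real.hasDerivAt_sin Y).pow 1)).mul ((Real.hasDerivAt_cos Y).pow 4)).const_mul (-225 / 4 : ℝ))).add ((((hasDerivAt_pow 1 Y).mul ((Real.hasDerivAt_sin Y).pow 1)).mul ((Real.hasDerivAt_cos Y).pow 5)).const_mul (-135 / 16 : ℝ)))
  have hden := (((Real.hasDerivAt_cos Y).div_const 2).const_add (2/3 : ℝ)).pow 5
  have h := hnum.div hden (pow_ne_zero _ hD)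
  refine h.congr_deriv ?_
  symm
  simp only [Pi.pow_apply, Pi.mul_apply, Pi.add_apply, Pi.sub_apply]
  rw [div_eq_div_iff (pow_ne_zero _ hD) (pow_ne_zero 2 (pow_ne_zero _ hD))]
  push_cast
  ring

lemma chainD4 : deriv (fun x => NF4 x / (2/3 + Real.cos x / 2) ^ 5)
    = (fun x => NF5 x / (2/3 + Real.cos x / 2) ^ 6) :=
  funext fun Y => (chain4 Y).deriv

lemma chain5 (Y : ℝ) : HasDerivAt (fun x => NF5 x / (2/3 + Real.cos x / 2) ^ 6)
    (NF6 Y / (2/3 + Real.cos Y / 2) ^ 7) Y := by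
  have hD : (2/3 + Real.cos Y / 2) ≠ 0 := ne_of_gt (Dpos Y)
  have hnum := ((((((((((((((((((((((((((hasDerivAt_pow 0 Y).mul ((Real.hasDerivAt_sin Y).pow 1)).mul ((Real.hasDerivAt_cos Y).pow 0)).const_mul (-7424 / 81 : ℝ)).add ((((hasDerivAt_pow 0 Y).mul ((Real.hasDerivAt_sin Y).pow 1)).mul ((Real.hasDerivAt_cos Y).pow 1)).const_mul (-640 / 81 : ℝ))).add ((((hasDerivAt_pow 0 Y).mul ((Real.hasDerivAt_sin Y).pow 1)).mul ((Real.hasDerivAt_cos Y).pow 2)).const_mul (20464 / 27 : ℝ))).add ((((hasDerivAt_pow 0 Y).mul ((Real.hasDerivAt_sin Y).pow 1)).mul ((Real.hasDerivAt_cos Y).pow 3)).const_mul (4016 / 3 : ℝ))).add ((((hasDerivAt_pow 0 Y).mul ((Real.hasDerivAt_sin Y).pow 1)).mul ((Real.hasDerivAt_cos Y).pow 4)).const_mul (1615 / 3 : ℝ))).add ((((hasDerivAt_pow 0 Y).mul ((Real.hasDerivAt_sin Y).pow 1)).mul ((Real.hasDerivAt_cos Y).pow 5)).const_mul (-1301 /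 2 : ℝ))).add ((((hasDerivAt_pow 0 Y).mul ((Real.hasDerivAt_sin Y).pow 1)).mul ((Real.hasDerivAt_cos Y).pow 6)).const_mul (-13005 / 16 : ℝ))).add ((((hasDerivAt_pow 0 Y).mul ((Real.hasDerivAt_sin Y).pow 1)).mul ((Real.hasDerivAt_cos Y).pow 7)).const_mul (-1359 / 4 : ℝ))).add ((((hasDerivAt_pow 0 Y).mul ((Real.hasDerivAt_sin Y).pow 1)).mul ((Real.hasDerivAt_cos Y).pow 8)).const_mul (-1647 / 32 : ℝ))).add ((((hasDerivAt_pow 0 Y).mul ((Real.hasDerivAt_sin Y).pow 3)).mul ((Real.hasDerivAt_cos Y).pow 0)).const_mul (2560 / 27 : ℝ))).add ((((hasDerivAt_pow 0 Y).mul ((Real.hasDerivAt_sin Y).pow 3)).mul ((Real.hasDerivAt_cos Y).pow 1)).const_mul (1280 / 3 : ℝ))).add ((((hasDerivAt_pow 0 Y).mul ((Real.hasDerivAt_sin Y).pow 3)).mul ((Real.hasDerivAt_cos Y).pow 2)).const_mul (800 : ℝ))).add ((((hasDerivAt_pow 0 Y).mul ((Real.hasDerivAt_sin Y).pow 3)).mul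 ((Real.hasDerivAt_cos Y).pow 3)).const_mul (800 : ℝ))).add ((((hasDerivAt_pow 0 Y).mul ((Real.hasDerivAt_sin Y).pow 3)).mul ((Real.hasDerivAt_cos Y).pow 4)).const_mul (450 : ℝ))).add ((((hasDerivAt_pow 0 Y).mul ((Real.hasDerivAt_sin Y).pow 3)).mul ((Real.hasDerivAt_cos Y).pow 5)).const_mul (135 : ℝ))).add ((((hasDerivAt_pow 0 Y).mul ((Real.hasDerivAt_sin Y).pow 3)).mul ((Real.hasDerivAt_cos Y).pow 6)).const_mul (135 / 8 : ℝ))).add ((((hasDerivAt_pow 1 Y).mul ((Real.hasDerivAt_sin Y).pow 0)).mul ((Real.hasDerivAt_cos Y).pow 1)).const_mul (-640 / 27 : ℝ))).add ((((hasDerivAt_pow 1 Y).mul ((Real.hasDerivAt_sin Y).pow 0)).mul ((Real.hasDerivAt_cos Y).pow 2)).const_mul (-320 / 3 : ℝ))).add ((((hasDerivAt_pow 1 Y).mul ((Real.hasDerivAt_sin Y).pow 0)).mul ((Real.hasDerivAt_cos Y).pow 3)).const_mul (-200 : ℝ))).add ((((hasDerivAt_pow 1 Y).mul ((Real.hasDerivAt_sin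 Y).pow 0)).mul ((Real.hasDerivAt_cos Y).pow 4)).const_mul (-200 : ℝ))).add ((((hasDerivAt_pow 1 Y).mul ((Real.hasDerivAt_sin Y).pow 0)).mul ((Real.hasDerivAt_cos Y).pow 5)).const_mul (-225 / 2 : ℝ))).add ((((hasDerivAt_pow 1 Y).mul ((Real.hasDerivAt_sin Y).pow 0)).mul ((Real.hasDerivAt_cos Y).pow 6)).const_mul (-135 / 4 : ℝ))).add ((((hasDerivAt_pow 1 Y).mul ((Real.hasDerivAt_sin Y).pow 0)).mul ((Real.hasDerivAt_cos Y).pow 7)).const_mul (-135 / 32 : ℝ)))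
  have hden := (((Real.hasDerivAt_cos Y).div_const 2).const_add (2/3 : ℝ)).pow 6
  have h := hnum.div hden (pow_ne_zero _ hD)
  refine h.congr_deriv ?_
  symm
  simp only [Pi.pow_apply, Pi.mul_apply, Pi.add_apply, Pi.sub_apply]
  rw [div_eq_div_iff (pow_ne_zero _ hD) (pow_ne_zero 2 (pow_ne_zero _ hD))]
  push_cast
  ring

lemma chainD5 : deriv (fun x => NF5 x / (2/3 + Real.cos x / 2) ^ 6)
    = (fun x => NF6 x / (2/3 + Real.cos x / 2) ^ 7) :=
  funext fun Y => (chain5 Y).deriv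

lemma chain6 (Y : ℝ) : HasDerivAt (fun x => NF6 x / (2/3 + Real.cos x / 2) ^ 7)
    (NF7 Y / (2/3 + Real.cos Y / 2) ^ 8) Y := by
  have hD : (2/3 + Real.cos Y / 2) ≠ 0 := ne_of_gt (Dpos Y)
  have hnum := ((((((((((((((((((((((((((((((hasDerivAt_pow 0 Y).mul ((Real.hasDerivAt_sin Y).pow 0)).mul ((Real.hasDerivAt_cos Y).pow 1)).const_mul (-18688 / 243 : ℝ)).add ((((hasDerivAt_pow 0 Y).mul ((Real.hasDerivAt_sin Y).pow 0)).mul ((Real.hasDerivAt_cos Y).pow 2)).const_mul (-32576 / 243 : ℝ))).add ((((hasDerivAt_pow 0 Y).mul ((Real.hasDerivAt_sin Y).pow 0)).mul ((Real.hasDerivAt_cos Y).pow 3)).const_mul (944 / 3 : ℝ))).add ((((hasDerivAt_pow 0 Y).mul ((Real.hasDerivAt_sin Y).pow 0)).mul ((Real.hasDerivAt_cos Y).pow 4)).const_mul (28028 / 27 : ℝ))).add ((((hasDerivAt_pow 0 Y).mul ((Real.hasDerivAt_sin Y).pow 0)).mul ((Real.hasDerivAt_cos Y).pow 5)).const_mul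 (7679 / 9 : ℝ))).add ((((hasDerivAt_pow 0 Y).mul ((Real.hasDerivAt_sin Y).pow 0)).mul ((Real.hasDerivAt_cos Y).pow 6)).const_mul (-973 / 4 : ℝ))).add ((((hasDerivAt_pow 0 Y).mul ((Real.hasDerivAt_sin Y).pow 0)).mul ((Real.hasDerivAt_cos Y).pow 7)).const_mul (-14189 / 16 : ℝ))).add ((((hasDerivAt_pow 0 Y).mul ((Real.hasDerivAt_sin Y).pow 0)).mul ((Real.hasDerivAt_cos Y).pow 8)).const_mul (-40641 / 64 : ℝ))).add ((((hasDerivAt_pow 0 Y).mul ((Real.hasDerivAt_sin Y).pow 0)).mul ((Real.hasDerivAt_cos Y).pow 9)).const_mul (-3267 / 16 : ℝ))).add ((((hasDerivAt_pow 0 Y).mul ((Real.hasDerivAt_sin Y).pow 0)).mul ((Real.hasDerivAt_cos Y).pow 10)).const_mul (-1647 / 64 : ℝ))).add ((((hasDerivAt_pow 0 Y).mul ((Real.hasDerivAt_sin Y).pow 2)).mul ((Real.hasDerivAt_cos Y).pow 0)).const_mul (-65536 / 243 : ℝ))).add ((((hasDerivAt_pow 0 Y).mul ((Real.hasDerivAt_sin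 Y).pow 2)).mul ((Real.hasDerivAt_cos Y).pow 1)).const_mul (-68096 / 81 : ℝ))).add ((((hasDerivAt_pow 0 Y).mul ((Real.hasDerivAt_sin Y).pow 2)).mul ((Real.hasDerivAt_cos Y).pow 2)).const_mul (-4480 / 27 : ℝ))).add ((((hasDerivAt_pow 0 Y).mul ((Real.hasDerivAt_sin Y).pow 2)).mul ((Real.hasDerivAt_cos Y).pow 3)).const_mul (25312 / 9 : ℝ))).add ((((hasDerivAt_pow 0 Y).mul ((Real.hasDerivAt_sin Y).pow 2)).mul ((Real.hasDerivAt_cos Y).pow 4)).const_mul (16520 / 3 : ℝ))).add ((((hasDerivAt_pow 0 Y).mul ((Real.hasDerivAt_sin Y).pow 2)).mul ((Real.hasDerivAt_cos Y).pow 5)).const_mul (5026 : ℝ))).add ((((hasDerivAt_pow 0 Y).mul ((Real.hasDerivAt_sin Y).pow 2)).mul ((Real.hasDerivAt_cos Y).pow 6)).const_mul (5061 / 2 : ℝ))).add ((((hasDerivAt_pow 0 Y).mul ((Real.hasDerivAt_sin Y).pow 2)).mul ((Real.hasDerivAt_cos Y).pow 7)).const_mul (5445 / 8 : ℝ))).add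 ((((hasDerivAt_pow 0 Y).mul ((Real.hasDerivAt_sin Y).pow 2)).mul ((Real.hasDerivAt_cos Y).pow 8)).const_mul (2457 / 32 : ℝ))).add ((((hasDerivAt_pow 1 Y).mul ((Real.hasDerivAt_sin Y).pow 1)).mul ((Real.hasDerivAt_cos Y).pow 0)).const_mul (1280 / 81 : ℝ))).add ((((hasDerivAt_pow 1 Y).mul ((Real.hasDerivAt_sin Y).pow 1)).mul ((Real.hasDerivAt_cos Y).pow 1)).const_mul (2240 / 27 : ℝ))).add ((((hasDerivAt_pow 1 Y).mul ((Real.hasDerivAt_sin Y).pow 1)).mul ((Real.hasDerivAt_cos Y).pow 2)).const_mul (560 / 3 : ℝ))).add ((((hasDerivAt_pow 1 Y).mul ((Real.hasDerivAt_sin Y).pow 1)).mul ((Real.hasDerivAt_cos Y).pow 3)).const_mul (700 / 3 : ℝ))).add ((((hasDerivAt_pow 1 Y).mul ((Real.hasDerivAt_sin Y).pow 1)).mul ((Real.hasDerivAt_cos Y).pow 4)).const_mul (175 : ℝ))).add ((((hasDerivAt_pow 1 Y).mul ((Real.hasDerivAt_sin Y).pow 1)).mul ((Real.hasDerivAt_cos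 Y).pow 5)).const_mul (315 / 4 : ℝ))).add ((((hasDerivAt_pow 1 Y).mul ((Real.hasDerivAt_sin Y).pow 1)).mul ((Real.hasDerivAt_cos Y).pow 6)).const_mul (315 / 16 : ℝ))).add ((((hasDerivAt_pow 1 Y).mul ((Real.hasDerivAt_sin Y).pow 1)).mul ((Real.hasDerivAt_cos Y).pow 7)).const_mul (135 / 64 : ℝ)))
  have hden := (((Real.hasDerivAt_cos Y).div_const 2).const_add (2/3 : ℝ)).pow 7
  have h := hnum.div hden (pow_ne_zero _ hD)
  refine h.congr_deriv ?_
  symm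
  simp only [Pi.pow_apply, Pi.mul_apply, Pi.add_apply, Pi.sub_apply]
  rw [div_eq_div_iff (pow_ne_zero _ hD) (pow_ne_zero 2 (pow_ne_zero _ hD))]
  push_cast
  ring

lemma chainD6 : deriv (fun x => NF6 x / (2/3 + Real.cos x / 2) ^ 7)
    = (fun x => NF7 x / (2/3 + Real.cos x / 2) ^ 8) :=
  funext fun Y => (chain6 Y).deriv

lemma chain7 (Y : ℝ) : HasDerivAt (fun x => NF7 x / (2/3 + Real.cos x / 2) ^ 8)
    (NF8 Y / (2/3 + Real.cos Y / 2) ^ 9) Y := by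
  have hD : (2/3 + Real.cos Y / 2) ≠ 0 := ne_of_gt (Dpos Y)
  have hnum := ((((((((((((((((((((((((((((((((hasDerivAt_pow 0 Y).mul ((Real.hasDerivAt_sin Y).pow 1)).mul ((Real.hasDerivAt_cos Y).pow 0)).const_mul (45056 / 729 : ℝ)).add ((((hasDerivAt_pow 0 Y).mul ((Real.hasDerivAt_sin Y).pow 1)).mul ((Real.hasDerivAt_cos Y).pow 1)).const_mul (-253952 / 729 : ℝ))).add ((((hasDerivAt_pow 0 Y).mul ((Real.hasDerivAt_sin Y).pow 1)).mul ((Real.hasDerivAt_cos Y).pow 2)).const_mul (-531968 / 243 : ℝ))).add ((((hasDerivAt_pow 0 Y).mul ((Real.hasDerivAt_sin Y).pow 1)).mul ((Real.hasDerivAt_cos Y).pow 3)).const_mul (-239104 / 81 : ℝ))).add ((((hasDerivAt_pow 0 Y).mul ((Real.hasDerivAt_sin Y).pow 1)).mul ((Real.hasDerivAt_cos Y).pow 4)).const_mul (68320 / 27 : ℝ))).add ((((hasDerivAt_pow 0 Y).mul ((Real.hasDerivAt_sin Y).pow 1)).mul ((Real.hasDerivAt_cos Y).pow 5)).const_mul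 (109088 / 9 : ℝ))).add ((((hasDerivAt_pow 0 Y).mul ((Real.hasDerivAt_sin Y).pow 1)).mul ((Real.hasDerivAt_cos Y).pow 6)).const_mul (48832 / 3 : ℝ))).add ((((hasDerivAt_pow 0 Y).mul ((Real.hasDerivAt_sin Y).pow 1)).mul ((Real.hasDerivAt_cos Y).pow 7)).const_mul (11798 : ℝ))).add ((((hasDerivAt_pow 0 Y).mul ((Real.hasDerivAt_sin Y).pow 1)).mul ((Real.hasDerivAt_cos Y).pow 8)).const_mul (79707 / 16 : ℝ))).add ((((hasDerivAt_pow 0 Y).mul ((Real.hasDerivAt_sin Y).pow 1)).mul ((Real.hasDerivAt_cos Y).pow 9)).const_mul (4635 / 4 : ℝ))).add ((((hasDerivAt_pow 0 Y).mul ((Real.hasDerivAt_sin Y).pow 1)).mul ((Real.hasDerivAt_cos Y).pow 10)).const_mul (14769 / 128 : ℝ))).add ((((hasDerivAt_pow 0 Y).mul ((Real.hasDerivAt_sin Y).pow 3)).mul ((Real.hasDerivAt_cos Y).pow 0)).const_mul (-93184 / 243 : ℝ))).add ((((hasDerivAt_pow 0 Y).mul ((Real.hasDerivAt_sin Y).pow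 3)).mul ((Real.hasDerivAt_cos Y).pow 1)).const_mul (-186368 / 81 : ℝ))).add ((((hasDerivAt_pow 0 Y).mul ((Real.hasDerivAt_sin Y).pow 3)).mul ((Real.hasDerivAt_cos Y).pow 2)).const_mul (-163072 / 27 : ℝ))).add ((((hasDerivAt_pow 0 Y).mul ((Real.hasDerivAt_sin Y).pow 3)).mul ((Real.hasDerivAt_cos Y).pow 3)).const_mul (-81536 / 9 : ℝ))).add ((((hasDerivAt_pow 0 Y).mul ((Real.hasDerivAt_sin Y).pow 3)).mul ((Real.hasDerivAt_cos Y).pow 4)).const_mul (-25480 / 3 : ℝ))).add ((((hasDerivAt_pow 0 Y).mul ((Real.hasDerivAt_sin Y).pow 3)).mul ((Real.hasDerivAt_cos Y).pow 5)).const_mul (-5096 : ℝ))).add ((((hasDerivAt_pow 0 Y).mul ((Real.hasDerivAt_sin Y).pow 3)).mul ((Real.hasDerivAt_cos Y).pow 6)).const_mul (-1911 : ℝ))).add ((((hasDerivAt_pow 0 Y).mul ((Real.hasDerivAt_sin Y).pow 3)).mul ((Real.hasDerivAt_cos Y).pow 7)).const_mul (-819 / 2 : ℝ))).add ((((hasDerivAt_pow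 0 Y).mul ((Real.hasDerivAt_sin Y).pow 3)).mul ((Real.hasDerivAt_cos Y).pow 8)).const_mul (-2457 / 64 : ℝ))).add ((((hasDerivAt_pow 1 Y).mul ((Real.hasDerivAt_sin Y).pow 0)).mul ((Real.hasDerivAt_cos Y).pow 1)).const_mul (2560 / 243 : ℝ))).add ((((hasDerivAt_pow 1 Y).mul ((Real.hasDerivAt_sin Y).pow 0)).mul ((Real.hasDerivAt_cos Y).pow 2)).const_mul (5120 / 81 : ℝ))).add ((((hasDerivAt_pow 1 Y).mul ((Real.hasDerivAt_sin Y).pow 0)).mul ((Real.hasDerivAt_cos Y).pow 3)).const_mul (4480 / 27 : ℝ))).add ((((hasDerivAt_pow 1 Y).mul ((Real.hasDerivAt_sin Y).pow 0)).mul ((Real.hasDerivAt_cos Y).pow 4)).const_mul (2240 / 9 : ℝ))).add ((((hasDerivAt_pow 1 Y).mul ((Real.hasDerivAt_sin Y).pow 0)).mul ((Real.hasDerivAt_cos Y).pow 5)).const_mul (700 / 3 : ℝ))).add ((((hasDerivAt_pow 1 Y).mul ((Real.hasDerivAt_sin Y).pow 0)).mul ((Real.hasDerivAt_cos Y).pow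 6)).const_mul (140 : ℝ))).add ((((hasDerivAt_pow 1 Y).mul ((Real.hasDerivAt_sin Y).pow 0)).mul ((Real.hasDerivAt_cos Y).pow 7)).const_mul (105 / 2 : ℝ))).add ((((hasDerivAt_pow 1 Y).mul ((Real.hasDerivAt_sin Y).pow 0)).mul ((Real.hasDerivAt_cos Y).pow 8)).const_mul (45 / 4 : ℝ))).add ((((hasDerivAt_pow 1 Y).mul ((Real.hasDerivAt_sin Y).pow 0)).mul ((Real.hasDerivAt_cos Y).pow 9)).const_mul (135 / 128 : ℝ)))
  have hden := (((Real.hasDerivAt_cos Y).div_const 2).const_add (2/3 : ℝ)).pow 8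
  have h := hnum.div hden (pow_ne_zero _ hD)
  refine h.congr_deriv ?_
  symm
  simp only [Pi.pow_apply, Pi.mul_apply, Pi.add_apply, Pi.sub_apply]
  rw [div_eq_div_iff (pow_ne_zero _ hD) (pow_ne_zero 2 (pow_ne_zero _ hD))]
  push_cast
  ring

lemma chainD7 : deriv (fun x => NF7 x / (2/3 + Real.cos x / 2) ^ 8)
    = (fun x => NF8 x / (2/3 + Real.cos x / 2) ^ 9) :=
  funext fun Y => (chain7 Y).deriv

lemma alg_key (Y s c : ℝ) (h : s ^ 2 + c ^ 2 = 1) :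
    96 * s ^ 8 / (c ^ 2 + 1 / 6) -
      2 * s * c * (270 * Y - 80 * (2 * s * c) + 3 * (2 * (2 * s * c) * (2 * c ^ 2 - 1)) -
        686 * (2 * s * c) / (3 * c ^ 2 + 1 / 2)) =
    ((288 : ℝ) * (Y ^ 0 * (2 * s * c) ^ 0 * (2 * c ^ 2 - 1) ^ 0) + (12 : ℝ) * (Y ^ 0 * (2 * s * c) ^ 0 * (2 * c ^ 2 - 1) ^ 1) + (-249 : ℝ) * (Y ^ 0 * (2 * s * c) ^ 0 * (2 * c ^ 2 - 1) ^ 2) + (-60 : ℝ) * (Y ^ 0 * (2 * s * c) ^ 0 * (2 * c ^ 2 - 1) ^ 3) + (9 : ℝ) * (Y ^ 0 * (2 * s * c) ^ 0 * (2 * c ^ 2 - 1) ^ 4) + (-180 : ℝ) * (Y ^ 1 * (2 * s * c) ^ 1 * (2 * c ^ 2 - 1) ^ 0) + (-135 : ℝ) * (Y ^ 1 * (2 * s * c) ^ 1 * (2 * c ^ 2 - 1) ^ 1)) / (2/3 + (2 * c ^ 2 - 1) / 2) ^ 1 := by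
  have h1 : c ^ 2 + (1:ℝ)/6 ≠ 0 := by positivity
  have h2 : (3:ℝ) * c ^ 2 + 1/2 ≠ 0 := by positivity
  have e1 : 686 * (2 * s * c) / (3 * c ^ 2 + 1 / 2) = 1372 / 3 * (s * c) / (c ^ 2 + 1 / 6) := by
    rw [div_eq_div_iff h2 h1]; ring
  rw [e1, show ((2:ℝ)/3 + (2 * c ^ 2 - 1) / 2) ^ 1 = c ^ 2 + 1 / 6 by ring]
  field_simp
  linear_combination ((1728 : ℝ) + (33048 : ℝ) * c ^ 2 + (221184 : ℝ) * c ^ 4 + (575424 : ℝ) * c ^ 6 + (373248 : ℝ) * c ^ 8 + (-93312 : ℝ) * c ^ 10 + (1728 : ℝ) * s ^ 2 + (17280 : ℝ) * s ^ 2 * c ^ 2 + (22464 : ℝ) * s ^ 2 * c ^ 4 + (-103680 : ℝ) * s ^ 2 * c ^ 6 + (62208 : ℝ) * s ^ 2 * c ^ 8 + (1728 : ℝ) * s ^ 4 + (19008 : ℝ) * s ^ 4 * c ^ 2 + (41472 : ℝ) * s ^ 4 * c ^ 4 + (-62208 : ℝ) * s ^ 4 * c ^ 6 + (1728 : ℝ)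 * s ^ 6 + (20736 : ℝ) * s ^ 6 * c ^ 2 + (62208 : ℝ) * s ^ 6 * c ^ 4) * h + ((-(20736*c^2+62208*c^4))*(s^6 + s^4*(1-c^2) + s^2*(1-c^2)^2 + (1-c^2)^3) - (209952*c^4+702432*c^6+207360*c^8-31104*c^10)) * h

lemma psi_eq : psiFun = fun x => NF0 x / (2/3 + Real.cos x / 2) ^ 1 := by
  funext Y
  show psiFun Y = NF0 Y / (2/3 + Real.cos Y / 2) ^ 1
  have hsY : Real.sin Y = 2 * Real.sin (Y/2) * Real.cos (Y/2) := by
    have h := Real.sin_two_mul (Y/2); rwa [show 2 * (Y/2) = Y by ring] at h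
  have hcY : Real.cos Y = 2 * Real.cos (Y/2) ^ 2 - 1 := by
    have h := Real.cos_two_mul (Y/2); rwa [show 2 * (Y/2) = Y by ring] at h
  unfold psiFun Vfun NF0
  rw [Real.sin_two_mul Y, hsY, hcY]
  linear_combination alg_key Y (Real.sin (Y/2)) (Real.cos (Y/2)) (Real.sin_sq_add_cos_sq (Y/2))

lemma phi_hasDerivAt (Y : ℝ) (hY : -1 < Real.cos Y) :
    HasDerivAt (fun x => Real.sin x * (166 + 387 * Real.cos x + 263 * Real.cos x ^ 2 + 31 * Real.cos x ^ 3 - 9 * Real.cos x ^ 4 + 2 * Real.cos x ^ 5) / (105 * (1 + Real.cos x) ^ 3) - x)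
      (2/35 * (1 - Real.cos Y) ^ 4 / (1 + Real.cos Y)) Y := by
  have hne : (1 + Real.cos Y) ≠ 0 := by linarith
  have hP := (((((hasDerivAt_const Y (166:ℝ)).add ((Real.hasDerivAt_cos Y).const_mul (387:ℝ))).add
      (((Real.hasDerivAt_cos Y).pow 2).const_mul (263:ℝ))).add (((Real.hasDerivAt_cos Y).pow 3).const_mul (31:ℝ))).sub
      (((Real.hasDerivAt_cos Y).pow 4).const_mul (9:ℝ))).add (((Real.hasDerivAt_cos Y).pow 5).const_mul (2:ℝ))
  have hnum := (Real.hasDerivAt_sin Y).mul hP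
  have hden := ((((Real.hasDerivAt_cos Y).const_add (1:ℝ)).pow 3).const_mul (105:ℝ))
  have hdne : (105:ℝ) * (1 + Real.cos Y) ^ 3 ≠ 0 := mul_ne_zero (by norm_num) (pow_ne_zero _ hne)
  have h := (hnum.div hden hdne).sub (hasDerivAt_id Y)
  refine h.congr_deriv ?_
  symm
  simp only [Pi.pow_apply, Pi.mul_apply, Pi.add_apply, Pi.sub_apply]
  field_simp
  linear_combination ((-3885 : ℝ) + (-16450 : ℝ) * Real.cos Y + (-27195 : ℝ) * Real.cos Y ^ 2 + (-21840 : ℝ) * Real.cos Y ^ 3 + (-8435 : ℝ) * Real.cos Y ^ 4 + (-1050 : ℝ) * Real.cos Y ^ 5 + (315 : ℝ) * Real.cos Y ^ 6 + (140 : ℝ) * Real.cos Y ^ 7) * Real.sin_sq_add_cos_sq Y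

lemma cos_gt_neg_one_of_Ico (x : ℝ) (hx : x ∈ Set.Ico (0:ℝ) π) : -1 < Real.cos x := by
  have h := Real.cos_lt_cos_of_nonneg_of_le_pi hx.1 le_rfl hx.2
  rw [Real.cos_pi] at h; exact h

lemma phi_mono : StrictMonoOn (fun x => Real.sin x * (166 + 387 * Real.cos x + 263 * Real.cos x ^ 2 + 31 * Real.cos x ^ 3 - 9 * Real.cos x ^ 4 + 2 * Real.cos x ^ 5) / (105 * (1 + Real.cos x) ^ 3) - x) (Set.Ico 0 π) := by
  apply strictMonoOn_of_deriv_pos (convex_Ico 0 π)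
  · apply ContinuousOn.sub _ continuousOn_id
    apply ContinuousOn.div
    · fun_prop
    · fun_prop
    · intro x hx
      have := cos_gt_neg_one_of_Ico x hx
      have h1 : (0:ℝ) < 1 + Real.cos x := by linarith
      positivity
  · intro x hx
    rw [interior_Ico] at hx
    have hm1 : -1 < Real.cos x := cos_gt_neg_one_of_Ico x ⟨hx.1.le, hx.2⟩
    have hlt1 : Real.cos x < 1 := by
      have h := Real.cos_lt_cos_of_nonneg_of_le_pi le_rfl hx.2.le hx.1
      rwa [Real.cos_zero] at h
    rw [(phi_hasDerivAt x hm1).deriv]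
    apply div_pos (mul_pos (by norm_num) (pow_pos (by linarith) 4)) (by linarith)

lemma key_ineq (Y : ℝ) (hY : Y ∈ Set.Ioo (0:ℝ) π) :
    Y * (105 * (1 + Real.cos Y) ^ 3) < Real.sin Y * (166 + 387 * Real.cos Y + 263 * Real.cos Y ^ 2 + 31 * Real.cos Y ^ 3 - 9 * Real.cos Y ^ 4 + 2 * Real.cos Y ^ 5) := by
  have h0m : (0:ℝ) ∈ Set.Ico (0:ℝ) π := ⟨le_rfl, Real.pi_pos⟩
  have hYm : Y ∈ Set.Ico (0:ℝ) π := ⟨hY.1.le, hY.2⟩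
  have h := phi_mono h0m hYm hY.1
  simp only [Real.sin_zero, Real.cos_zero, zero_mul, sub_zero] at h
  norm_num at h
  have hm1 : -1 < Real.cos Y := cos_gt_neg_one_of_Ico Y hYm
  have hd : (0:ℝ) < 105 * (1 + Real.cos Y) ^ 3 := mul_pos (by norm_num) (pow_pos (by linarith) 3)
  have h2 : Y < Real.sin Y * (166 + 387 * Real.cos Y + 263 * Real.cos Y ^ 2 + 31 * Real.cos Y ^ 3 - 9 * Real.cos Y ^ 4 + 2 * Real.cos Y ^ 5) / (105 * (1 + Real.cos Y) ^ 3) := by linarith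
  exact (lt_div_iff₀ hd).mp h2

lemma NF0_pos (Y : ℝ) (hY : Y ∈ Set.Ioo (0:ℝ) (2*π)) : 0 < NF0 Y := by
  obtain ⟨h0, h2pi⟩ := hY
  have hcm : -1 ≤ Real.cos Y := Real.neg_one_le_cos Y
  have hc1 : Real.cos Y < 1 := by
    rcases lt_or_eq_of_le (Real.cos_le_one Y) with h | h
    · exact h
    · exfalso
      have := (Real.cos_eq_one_iff_of_lt_of_lt (by linarith [Real.pi_pos]) h2pi).mp h
      linarith
  have hform : NF0 Y = 6*(1-Real.cos Y)^4 + (1-Real.cos Y^2)*(282+36*Real.cos Y-3*Real.cos Y^2)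
      - Y*Real.sin Y*(180+135*Real.cos Y) := by simp only [NF0]; ring
  rcases le_or_gt (Real.sin Y) 0 with hs | hs
  · have hca : (0:ℝ) ≤ 1 - Real.cos Y^2 := by nlinarith
    have hcb : (0:ℝ) ≤ 282+36*Real.cos Y-3*Real.cos Y^2 := by nlinarith [hca]
    have hq : 0 ≤ (1 - Real.cos Y^2) * (282+36*Real.cos Y-3*Real.cos Y^2) := mul_nonneg hca hcb
    have hr : (0:ℝ) ≤ 180+135*Real.cos Y := by linarith
    have ht : 0 ≤ -(Y * Real.sin Y * (180+135*Real.cos Y)) := by nlinarith [mul_nonneg (mul_nonneg (le_of_lt h0) (neg_nonneg.mpr hs)) hr]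
    have h4 : 0 < 6*(1-Real.cos Y)^4 := mul_pos (by norm_num) (pow_pos (by linarith) 4)
    linarith [hform]
  · have hYpi : Y < π := by
      by_contra hge
      push_neg at hge
      have h1 : 0 ≤ Real.sin (Y - π) := Real.sin_nonneg_of_nonneg_of_le_pi (by linarith) (by linarith)
      rw [Real.sin_sub_pi] at h1
      linarith
    have hkey := key_ineq Y ⟨h0, hYpi⟩
    have hm1 : -1 < Real.cos Y := cos_gt_neg_one_of_Ico Y ⟨le_of_lt h0, hYpi⟩
    have hs2 : Real.sin Y ^ 2 = 1 - Real.cos Y ^ 2 := by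
      have := Real.sin_sq_add_cos_sq Y; linarith
    have hA : (0:ℝ) < 105 * (1 + Real.cos Y) ^ 3 := mul_pos (by norm_num) (pow_pos (by linarith) 3)
    have hR : (0:ℝ) < Real.sin Y * (180 + 135 * Real.cos Y) := mul_pos hs (by linarith)
    have hstep := mul_lt_mul_of_pos_right hkey hR
    have t1 : (0:ℝ) ≤ (1 - Real.cos Y)^4 := by positivity
    have t2 : (0:ℝ) ≤ (1 + Real.cos Y)^3 := pow_nonneg (by linarith) 3
    have t3 : (0:ℝ) ≤ 4 + 3*Real.cos Y := by linarith
    have hW : 0 ≤ 90 * (1 - Real.cos Y)^4 * (4 + 3*Real.cos Y) * (1 + Real.cos Y)^3 := by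
      nlinarith [mul_nonneg (mul_nonneg t1 t3) t2]
    have hident : NF0 Y * (105 * (1 + Real.cos Y) ^ 3)
        = 90 * (1 - Real.cos Y)^4 * (4 + 3*Real.cos Y) * (1 + Real.cos Y)^3
          + ((1 - Real.cos Y^2) - Real.sin Y^2) * ((166 + 387 * Real.cos Y + 263 * Real.cos Y ^ 2 + 31 * Real.cos Y ^ 3 - 9 * Real.cos Y ^ 4 + 2 * Real.cos Y ^ 5) * (180 + 135*Real.cos Y))
          + ((Real.sin Y * (166 + 387 * Real.cos Y + 263 * Real.cos Y ^ 2 + 31 * Real.cos Y ^ 3 - 9 * Real.cos Y ^ 4 + 2 * Real.cos Y ^ 5)) * (Real.sin Y * (180 + 135 * Real.cos Y))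
             - (Y * (105 * (1 + Real.cos Y) ^ 3)) * (Real.sin Y * (180 + 135 * Real.cos Y))) := by
      simp only [NF0]; ring
    have hmid : ((1 - Real.cos Y^2) - Real.sin Y^2) * ((166 + 387 * Real.cos Y + 263 * Real.cos Y ^ 2 + 31 * Real.cos Y ^ 3 - 9 * Real.cos Y ^ 4 + 2 * Real.cos Y ^ 5) * (180 + 135*Real.cos Y)) = 0 := by
      rw [hs2]; ring
    have hmain : 0 < NF0 Y * (105 * (1 + Real.cos Y) ^ 3) := by linarith [hident, hmid, hstep, hW]
    nlinarith [hmain, hA]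

/-- `ψ` vanishes at `0` and `2π`, is positive on `(0, 2π)`, vanishes to order `8` at
the origin with positive eighth derivative, and `ψ′(2π) = -540π`. -/
theorem psiFun_properties :
    psiFun 0 = 0 ∧ psiFun (2 * π) = 0 ∧
    (∀ Y ∈ Set.Ioo (0 : ℝ) (2 * π), 0 < psiFun Y) ∧
    (∀ j : ℕ, j ≤ 7 → iteratedDeriv j psiFun 0 = 0) ∧
    0 < iteratedDeriv 8 psiFun 0 ∧
    deriv psiFun (2 * π) = -540 * π := by
  refine ⟨?_, ?_, ?_, ?_, ?_, ?_⟩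
  · simp [psiFun, Vfun]
  · have hs2pi : Real.sin (2*π) = 0 := Real.sin_two_pi
    have hspi : Real.sin (2*π/2) = 0 := by rw [show (2*π)/2 = π by ring]; exact Real.sin_pi
    simp [psiFun, Vfun, hs2pi, hspi]
  · intro Y hY
    rw [psi_eq]
    exact div_pos (NF0_pos Y hY) (pow_pos (Dpos Y) 1)
  · intro j hj
    interval_cases j
    · rw [psi_eq, iteratedDeriv_zero]; norm_num [NF0]
    · rw [psi_eq, iteratedDeriv_succ', chainD0, iteratedDeriv_zero]; norm_num [NF1]
    · rw [psi_eq, iteratedDeriv_succ', chainD0, iteratedDeriv_succ', chainD1, iteratedDeriv_zero]; norm_num [NF2]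
    · rw [psi_eq, iteratedDeriv_succ', chainD0, iteratedDeriv_succ', chainD1, iteratedDeriv_succ', chainD2, iteratedDeriv_zero]; norm_num [NF3]
    · rw [psi_eq, iteratedDeriv_succ', chainD0, iteratedDeriv_succ', chainD1, iteratedDeriv_succ', chainD2, iteratedDeriv_succ', chainD3, iteratedDeriv_zero]; norm_num [NF4]
    · rw [psi_eq, iteratedDeriv_succ', chainD0, iteratedDeriv_succ', chainD1, iteratedDeriv_succ', chainD2, iteratedDeriv_succ', chainD3, iteratedDeriv_succ', chainD4, iteratedDeriv_zero]; norm_num [NF5]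
    · rw [psi_eq, iteratedDeriv_succ', chainD0, iteratedDeriv_succ', chainD1, iteratedDeriv_succ', chainD2, iteratedDeriv_succ', chainD3, iteratedDeriv_succ', chainD4, iteratedDeriv_succ', chainD5, iteratedDeriv_zero]; norm_num [NF6]
    · rw [psi_eq, iteratedDeriv_succ', chainD0, iteratedDeriv_succ', chainD1, iteratedDeriv_succ', chainD2, iteratedDeriv_succ', chainD3, iteratedDeriv_succ', chainD4, iteratedDeriv_succ', chainD5, iteratedDeriv_succ', chainD6, iteratedDeriv_zero]; norm_num [NF7]
  · rw [psi_eq, iteratedDeriv_succ', chainD0, iteratedDeriv_succ', chainD1, iteratedDeriv_succ', chainD2, iteratedDeriv_succ', chainD3, iteratedDeriv_succ', chainD4, iteratedDeriv_succ', chainD5, iteratedDeriv_succ', chainD6, iteratedDeriv_succ', chainD7, iteratedDeriv_zero]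
    norm_num [NF8]
  · rw [psi_eq, chainD0]
    norm_num [NF1, Real.sin_two_pi, Real.cos_two_pi]
    ring
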